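/- arXiv:1003.2816 — 2 statements merged into one kernel-verified Lean document; each statement's English description precedes it below -/
import Mathlib

section
/- Let {A_n}_{n≥1} be a sequence of d×d real matrices with all entries strictly positive, and for each n let m_n and M_n denote the smallest and the largest entry of A_n, respectively. If ∑_{n=1}^∞ m_n/M_n = ∞, then τ(A_m A_{m+1} ⋯ A_n) → 0 as n → ∞, for every m ≥ 1. -/
open Filter

set_option maxHeartbeats 1000000
set_option linter.unusedSectionVars false

lemma interval_lin {a lo hi c1 c2 : ℝ} (h1 : lo ≤ a) (h2 : a ≤ hi)
    (hlo : c1*lo ≤ c2) (hhi : c1*hi ≤ c2) : c1*a ≤ c2 := by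
  rcases le_total 0 c1 with h | h
  · calc c1*a ≤ c1*hi := by nlinarith
    _ ≤ c2 := hhi
  · calc c1*a ≤ c1*lo := by nlinarith
    _ ≤ c2 := hlo

/-- Core four-variable inequality behind Birkhoff's contraction bound. -/
lemma core_ineq (Au Bu Av Bv s m M : ℝ)
    (hAv : 0 ≤ Av) (hBv : 0 ≤ Bv) (hs : 1 ≤ s) (hm : 0 < m) (hmM : m ≤ M)
    (h1 : m^2*Av ≤ m*M*Au) (h2 : m*M*Au ≤ M^2*Av)
    (h3 : m^2*Bv ≤ m*M*Bu) (h4 : m*M*Bu ≤ M^2*Bv) :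
    (Au + s^2*Bu)*(Av+Bv)*(M+m*s)^2 ≤ (s*M+m)^2*(Au+Bu)*(Av+s^2*Bv) := by
  have hM : 0 < M := lt_of_lt_of_le hm hmM
  have hs0 : (0:ℝ) ≤ s := by linarith
  have hm0 : (0:ℝ) ≤ m := hm.le
  have hM0 : (0:ℝ) ≤ M := hM.le
  have hs1 : (0:ℝ) ≤ s^2 - 1 := by nlinarith
  have hM2 : (0:ℝ) ≤ M^2 - m^2 := by nlinarith
  have hfac : (0:ℝ) ≤ (s^2-1)*(M^2-m^2) := mul_nonneg hs1 hM2
  have hAsB : (0:ℝ) ≤ Av + s^2*Bv := by positivity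
  have hAB : (0:ℝ) ≤ Av + Bv := by linarith
  set c1 : ℝ := (Av+Bv)*(M+m*s)^2 - (s*M+m)^2*(Av+s^2*Bv) with hc1
  set c3 : ℝ := (s*M+m)^2*(Av+s^2*Bv) - s^2*(Av+Bv)*(M+m*s)^2 with hc3
  -- four corner inequalities
  have corner_ll : c1*(m^2*Av) ≤ c3*(m^2*Bv) := by
    have h := mul_nonneg (mul_nonneg (mul_nonneg hfac (mul_nonneg hAB hAsB)) hm0) hm0
    rw [hc1, hc3]; nlinarith [h]
  have corner_hh : c1*(M^2*Av) ≤ c3*(M^2*Bv) := by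
    have h := mul_nonneg (mul_nonneg (mul_nonneg hfac (mul_nonneg hAB hAsB)) hM0) hM0
    rw [hc1, hc3]; nlinarith [h]
  have corner_lh : c1*(m^2*Av) ≤ c3*(M^2*Bv) := by
    have h := mul_nonneg hfac (sq_nonneg (m*Av - M*s*Bv))
    rw [hc1, hc3]; nlinarith [h]
  have corner_hl : c1*(M^2*Av) ≤ c3*(m^2*Bv) := by
    have h1' := mul_nonneg hfac (mul_nonneg (mul_nonneg hM0 hM0) (mul_nonneg hAv hAv))
    have h2' := mul_nonneg hfac (mul_nonneg (mul_nonneg (mul_nonneg (mul_nonneg (mul_nonneg hs0 hs0) hm0) hm0) hBv) hBv)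
    have h3' := mul_nonneg (mul_nonneg hfac (by nlinarith : (0:ℝ) ≤ (s^2+1)*(M^2+m^2)+2*s*m*M)) (mul_nonneg hAv hBv)
    rw [hc1, hc3]; nlinarith [h1', h2', h3']
  -- reduce Bu at each Au-endpoint
  have e_lo : c1*(m^2*Av) ≤ c3*(m*M*Bu) := by
    have := interval_lin (c1 := -c3) (c2 := -(c1*(m^2*Av))) h3 h4 (by linarith) (by linarith)
    linarith
  have e_hi : c1*(M^2*Av) ≤ c3*(m*M*Bu) := by
    have := interval_lin (c1 := -c3) (c2 := -(c1*(M^2*Av))) h3 h4 (by linarith) (by linarith)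
    linarith
  -- reduce Au
  have red : c1*(m*M*Au) ≤ c3*(m*M*Bu) := interval_lin h1 h2 e_lo e_hi
  -- divide by m*M
  have red' : (m*M)*(c1*Au) ≤ (m*M)*(c3*Bu) := by
    have e1 : (m*M)*(c1*Au) = c1*(m*M*Au) := by ring
    have e2 : (m*M)*(c3*Bu) = c3*(m*M*Bu) := by ring
    rw [e1, e2]; exact red
  have final : c1*Au ≤ c3*Bu := le_of_mul_le_mul_left red' (by positivity)
  rw [hc1, hc3] at final; nlinarith [final]

lemma log_contract {s m M : ℝ} (hs : 1 ≤ s) (hm : 0 < m) (hmM : m ≤ M) :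
    Real.log ((s*M+m)/(M+m*s)) ≤ (M-m)/(M+m) * Real.log s := by
  have hM : 0 < M := lt_of_lt_of_le hm hmM
  set τ : ℝ := (M-m)/(M+m) with hτdef
  set g : ℝ → ℝ := fun t => τ * Real.log t - Real.log (t*M+m) + Real.log (M+m*t) with hg
  -- derivative computation
  have hderiv : ∀ t : ℝ, 1 ≤ t → HasDerivAt g
      (τ * t⁻¹ - M/(t*M+m) + m/(M+m*t)) t := by
    intro t ht
    have ht0 : (0:ℝ) < t := by linarith
    have hd1 : (0:ℝ) < t*M+m := by positivity
    have hd2 : (0:ℝ) < M+m*t := by positivity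
    have h1 : HasDerivAt (fun u : ℝ => τ * Real.log u) (τ * t⁻¹) t :=
      (Real.hasDerivAt_log ht0.ne').const_mul τ
    have h2 : HasDerivAt (fun u : ℝ => Real.log (u*M+m)) (M/(t*M+m)) t := by
      have := (((hasDerivAt_id t).mul_const M).add_const m).log hd1.ne'
      simpa using this
    have h3 : HasDerivAt (fun u : ℝ => Real.log (M+m*u)) (m/(M+m*t)) t := by
      have := (((hasDerivAt_id t).const_mul m).const_add M).log hd2.ne'
      simpa using this
    exact (h1.sub h2).add h3
  have hderiv_nonneg : ∀ t : ℝ, 1 ≤ t → 0 ≤ τ * t⁻¹ - M/(t*M+m) + m/(M+m*t) := by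
    intro t ht
    have ht0 : (0:ℝ) < t := by linarith
    have hd1 : (0:ℝ) < t*M+m := by positivity
    have hd2 : (0:ℝ) < M+m*t := by positivity
    have hMm : (0:ℝ) < M+m := by linarith
    have hτe : τ*(M+m) = M-m := div_mul_cancel₀ _ hMm.ne'
    have hpoly : 0 ≤ (M-m)*(t*M+m)*(M+m*t) + (M+m)*(m*t*(t*M+m) - M*t*(M+m*t)) := by
      nlinarith [mul_nonneg (mul_nonneg hm.le hM.le) (mul_nonneg (by linarith : (0:ℝ) ≤ M-m) (sq_nonneg (t-1)))]
    have hkey : 0 ≤ (τ*(t*M+m)*(M+m*t) + m*t*(t*M+m) - M*t*(M+m*t)) * (M+m) := by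
      have e : (τ*(t*M+m)*(M+m*t) + m*t*(t*M+m) - M*t*(M+m*t)) * (M+m)
          = (M-m)*(t*M+m)*(M+m*t) + (M+m)*(m*t*(t*M+m) - M*t*(M+m*t)) := by
        linear_combination ((t*M+m)*(M+m*t)) * hτe
      rw [e]; exact hpoly
    have hkey2 : 0 ≤ τ*(t*M+m)*(M+m*t) + m*t*(t*M+m) - M*t*(M+m*t) := by
      by_contra hcon
      push_neg at hcon
      nlinarith [hkey]
    have e2 : τ * t⁻¹ - M/(t*M+m) + m/(M+m*t)
        = (τ*(t*M+m)*(M+m*t) + m*t*(t*M+m) - M*t*(M+m*t))/(t*(t*M+m)*(M+m*t)) := by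
      field_simp
      ring
    rw [e2]
    exact div_nonneg hkey2 (by positivity)
  -- monotonicity
  have hmono : MonotoneOn g (Set.Ici 1) := by
    apply monotoneOn_of_deriv_nonneg (convex_Ici 1)
    · apply ContinuousOn.mono (s := Set.Ici 1) _ le_rfl
      intro t ht
      exact ((hderiv t ht).continuousAt).continuousWithinAt
    · intro t ht
      rw [interior_Ici] at ht
      exact ((hderiv t (le_of_lt ht)).differentiableAt).differentiableWithinAt
    · intro t ht
      rw [interior_Ici] at ht
      rw [(hderiv t ht.le).deriv]
      exact hderiv_nonneg t ht.le
  have h01 : g 1 ≤ g s := hmono (Set.mem_Ici.2 le_rfl) (Set.mem_Ici.2 hs) hs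
  have hg1 : g 1 = 0 := by
    simp only [hg]
    rw [Real.log_one]
    ring_nf
  have hnum : (0:ℝ) < s*M+m := by positivity
  have hden : (0:ℝ) < M+m*s := by positivity
  rw [Real.log_div hnum.ne' hden.ne']
  have hgs : g s = τ * Real.log s - Real.log (s*M+m) + Real.log (M+m*s) := rfl
  rw [hg1, hgs] at h01
  linarith
set_option maxHeartbeats 1000000
set_option linter.unusedSectionVars false


/-- The Hilbert projective metric on strictly positive vectors in `ℝ^d`. -/
noncomputable def hilbertDist {d : ℕ} (x y : Fin d → ℝ) : ℝ :=
  Real.log (⨆ i : Fin d, ⨆ j : Fin d, (x i * y j) / (x j * y i))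

section helpers
variable {d : ℕ} [Nonempty (Fin d)] {x y : Fin d → ℝ}

lemma bddf (f : Fin d → ℝ) : BddAbove (Set.range f) := (Set.finite_range f).bddAbove

lemma term_le_sup (i j : Fin d) :
    (x i * y j) / (x j * y i) ≤ ⨆ i : Fin d, ⨆ j : Fin d, (x i * y j) / (x j * y i) :=
  calc (x i * y j) / (x j * y i)
      ≤ ⨆ j : Fin d, (x i * y j) / (x j * y i) :=
        le_ciSup (f := fun j => (x i * y j) / (x j * y i)) (bddf _) j
    _ ≤ ⨆ i : Fin d, ⨆ j : Fin d, (x i * y j) / (x j * y i) :=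
        le_ciSup (f := fun i => ⨆ j : Fin d, (x i * y j) / (x j * y i)) (bddf _) i

lemma hilbert_le_log {K : ℝ} (hpos : ∀ i j : Fin d, 0 < (x i * y j) / (x j * y i))
    (hK : ∀ i j : Fin d, (x i * y j) / (x j * y i) ≤ K) :
    hilbertDist x y ≤ Real.log K := by
  unfold hilbertDist
  have h1 : (⨆ i : Fin d, ⨆ j : Fin d, (x i * y j) / (x j * y i)) ≤ K :=
    ciSup_le fun i => ciSup_le fun j => hK i j
  have h2 : (0:ℝ) < ⨆ i : Fin d, ⨆ j : Fin d, (x i * y j) / (x j * y i) := by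
    obtain ⟨i⟩ := (inferInstance : Nonempty (Fin d))
    exact lt_of_lt_of_le (hpos i i) (term_le_sup i i)
  exact Real.log_le_log h2 h1

lemma log_le_hilbert (hpos : ∀ i j : Fin d, 0 < (x i * y j) / (x j * y i)) (i j : Fin d) :
    Real.log ((x i * y j) / (x j * y i)) ≤ hilbertDist x y :=
  Real.log_le_log (hpos i j) (term_le_sup i j)

lemma hilbert_nonneg (hx : ∀ i, 0 < x i) (hy : ∀ i, 0 < y i) :
    0 ≤ hilbertDist x y := by
  obtain ⟨i⟩ := (inferInstance : Nonempty (Fin d))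
  have h : Real.log ((x i * y i) / (x i * y i)) = 0 := by
    rw [div_self (mul_pos (hx i) (hy i)).ne']; exact Real.log_one
  have := log_le_hilbert (x := x) (y := y) (fun i j => div_pos (mul_pos (hx i) (hy j)) (mul_pos (hx j) (hy i))) i i
  linarith [this, h.symm.le]
end helpers

/-- Birkhoff contraction for a positive matrix with entries in `[m, M]`. -/
lemma hilbert_contract {d : ℕ} (hd : 0 < d) (A : Matrix (Fin d) (Fin d) ℝ)
    {m M : ℝ} (hm : 0 < m) (hmM : m ≤ M)
    (hAm : ∀ i j, m ≤ A i j) (hAM : ∀ i j, A i j ≤ M)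
    {x y : Fin d → ℝ} (hx : ∀ i, 0 < x i) (hy : ∀ i, 0 < y i) :
    hilbertDist (A.mulVec x) (A.mulVec y) ≤ (M-m)/(M+m) * hilbertDist x y := by
  haveI : Nonempty (Fin d) := ⟨⟨0, hd⟩⟩
  have hM : 0 < M := lt_of_lt_of_le hm hmM
  have hτ : 0 ≤ (M-m)/(M+m) := div_nonneg (by linarith) (by linarith)
  -- positivity of images
  have hAx : ∀ i, 0 < (A.mulVec x) i := by
    intro i
    apply Finset.sum_pos (fun k _ => mul_pos (lt_of_lt_of_le hm (hAm i k)) (hx k))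
      Finset.univ_nonempty
  have hAy : ∀ i, 0 < (A.mulVec y) i := by
    intro i
    apply Finset.sum_pos (fun k _ => mul_pos (lt_of_lt_of_le hm (hAm i k)) (hy k))
      Finset.univ_nonempty
  -- ratio function and its extremes
  set r : Fin d → ℝ := fun i => x i / y i with hr
  obtain ⟨i0, -, hi0⟩ := Finset.exists_max_image Finset.univ r Finset.univ_nonempty
  obtain ⟨j0, -, hj0⟩ := Finset.exists_min_image Finset.univ r Finset.univ_nonempty
  set α : ℝ := r j0 with hα
  set β : ℝ := r i0 with hβ
  have hrpos : ∀ i, 0 < r i := fun i => div_pos (hx i) (hy i)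
  have hα0 : 0 < α := hrpos j0
  have hβ0 : 0 < β := hrpos i0
  have hαβ : α ≤ β := le_trans (hj0 i0 (Finset.mem_univ i0)) le_rfl
  have hrange : ∀ k, α ≤ r k ∧ r k ≤ β :=
    fun k => ⟨hj0 k (Finset.mem_univ k), hi0 k (Finset.mem_univ k)⟩
  have hxk : ∀ k, x k = r k * y k := fun k =>
    (div_mul_cancel₀ (x k) (hy k).ne').symm
  rcases eq_or_lt_of_le hαβ with heq | hlt
  · -- degenerate case: all ratios equal, x = α • y
    have hxy : ∀ k, x k = α * y k := by
      intro k
      have h1 := (hrange k).1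
      have h2 := (hrange k).2
      have : r k = α := le_antisymm (heq ▸ h2) h1
      rw [hxk k, this]
    have himg : ∀ i, (A.mulVec x) i = α * (A.mulVec y) i := by
      intro i
      simp only [Matrix.mulVec, dotProduct]
      rw [Finset.mul_sum]
      exact Finset.sum_congr rfl fun k _ => by rw [hxy k]; ring
    have hzero : hilbertDist (A.mulVec x) (A.mulVec y) ≤ 0 := by
      have := hilbert_le_log (x := A.mulVec x) (y := A.mulVec y) (K := 1)
        (fun i j => div_pos (mul_pos (hAx i) (hAy j)) (mul_pos (hAx j) (hAy i)))
        (fun i j => by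
          rw [himg i, himg j]
          have e : α * A.mulVec y i * A.mulVec y j = α * A.mulVec y j * A.mulVec y i := by
            ring
          rw [e, div_self (mul_pos (mul_pos hα0 (hAy j)) (hAy i)).ne'])
      simpa [Real.log_one] using this
    have := hilbert_nonneg hx hy
    calc hilbertDist (A.mulVec x) (A.mulVec y) ≤ 0 := hzero
      _ ≤ (M-m)/(M+m) * hilbertDist x y := mul_nonneg hτ this
  · -- main case α < β
    set s : ℝ := Real.sqrt (β/α) with hs
    have hρ1 : 1 ≤ β/α := (one_le_div hα0).2 hαβ
    have hs1 : 1 ≤ s := by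
      rw [hs, show (1:ℝ) = Real.sqrt 1 from Real.sqrt_one.symm]
      exact Real.sqrt_le_sqrt hρ1
    have hs2 : s^2 = β/α := Real.sq_sqrt (by positivity)
    have hβα : β = α * s^2 := by rw [hs2]; field_simp
    -- decomposition
    set a : Fin d → ℝ := fun k => (β - r k)/(β - α) * y k with ha
    set b : Fin d → ℝ := fun k => (r k - α)/(β - α) * y k with hb
    have hba : β - α ≠ 0 := by linarith
    have hab : ∀ k, a k + b k = y k := by
      intro k; rw [ha, hb]
      calc (β - r k)/(β-α)*y k + (r k - α)/(β-α)*y k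
          = ((β - r k) + (r k - α))/(β-α)*y k := by ring
        _ = y k := by
            rw [show (β - r k) + (r k - α) = β - α by ring, div_self hba, one_mul]
    have hxab : ∀ k, x k = α * a k + β * b k := by
      intro k; rw [ha, hb]
      calc x k = r k * y k := hxk k
        _ = (r k * (β-α))/(β-α) * y k := by
            rw [mul_div_assoc, div_self hba, mul_one]
        _ = α * ((β - r k)/(β-α)*y k) + β * ((r k - α)/(β-α)*y k) := by ring
    have ha0 : ∀ k, 0 ≤ a k := fun k =>
      mul_nonneg (div_nonneg (by linarith [(hrange k).2]) (by linarith)) (hy k).le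
    have hb0 : ∀ k, 0 ≤ b k := fun k =>
      mul_nonneg (div_nonneg (by linarith [(hrange k).1]) (by linarith)) (hy k).le
    -- per-pair bound
    have hK : ∀ i j, ((A.mulVec x) i * (A.mulVec y) j) / ((A.mulVec x) j * (A.mulVec y) i)
        ≤ ((s*M+m)/(M+m*s))^2 := by
      intro i j
      set Au : ℝ := ∑ k, A i k * a k with hAu
      set Bu : ℝ := ∑ k, A i k * b k with hBu
      set Av : ℝ := ∑ k, A j k * a k with hAv
      set Bv : ℝ := ∑ k, A j k * b k with hBv
      set Sa : ℝ := ∑ k, a k with hSa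
      set Sb : ℝ := ∑ k, b k with hSb
      have hSa0 : 0 ≤ Sa := Finset.sum_nonneg fun k _ => ha0 k
      have hSb0 : 0 ≤ Sb := Finset.sum_nonneg fun k _ => hb0 k
      have bounds : ∀ (i' : Fin d), m * Sa ≤ (∑ k, A i' k * a k) ∧ (∑ k, A i' k * a k) ≤ M * Sa
          ∧ m * Sb ≤ (∑ k, A i' k * b k) ∧ (∑ k, A i' k * b k) ≤ M * Sb := by
        intro i'
        refine ⟨?_, ?_, ?_, ?_⟩
        · rw [hSa, Finset.mul_sum]
          exact Finset.sum_le_sum fun k _ => mul_le_mul_of_nonneg_right (hAm i' k) (ha0 k)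
        · rw [hSa, Finset.mul_sum]
          exact Finset.sum_le_sum fun k _ => mul_le_mul_of_nonneg_right (hAM i' k) (ha0 k)
        · rw [hSb, Finset.mul_sum]
          exact Finset.sum_le_sum fun k _ => mul_le_mul_of_nonneg_right (hAm i' k) (hb0 k)
        · rw [hSb, Finset.mul_sum]
          exact Finset.sum_le_sum fun k _ => mul_le_mul_of_nonneg_right (hAM i' k) (hb0 k)
      obtain ⟨hAu1, hAu2, hBu1, hBu2⟩ := bounds i
      obtain ⟨hAv1, hAv2, hBv1, hBv2⟩ := bounds j
      have hAv0 : 0 ≤ Av := le_trans (by positivity) hAv1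
      have hBv0 : 0 ≤ Bv := le_trans (by positivity) hBv1
      have core := core_ineq Au Bu Av Bv s m M hAv0 hBv0 hs1 hm hmM
        (by nlinarith [mul_le_mul_of_nonneg_left hAv2 (mul_nonneg hm.le hm.le),
              mul_le_mul_of_nonneg_left hAu1 (mul_nonneg hm.le hM.le)])
        (by nlinarith [mul_le_mul_of_nonneg_left hAu2 (mul_nonneg hm.le hM.le),
              mul_le_mul_of_nonneg_left hAv1 (mul_nonneg hM.le hM.le)])
        (by nlinarith [mul_le_mul_of_nonneg_left hBv2 (mul_nonneg hm.le hm.le),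
              mul_le_mul_of_nonneg_left hBu1 (mul_nonneg hm.le hM.le)])
        (by nlinarith [mul_le_mul_of_nonneg_left hBu2 (mul_nonneg hm.le hM.le),
              mul_le_mul_of_nonneg_left hBv1 (mul_nonneg hM.le hM.le)])
      -- express images
      have himx : ∀ (i' : Fin d), (A.mulVec x) i'
          = α * (∑ k, A i' k * a k) + β * (∑ k, A i' k * b k) := by
        intro i'
        simp only [Matrix.mulVec, dotProduct]
        rw [Finset.mul_sum, Finset.mul_sum, ← Finset.sum_add_distrib]
        exact Finset.sum_congr rfl fun k _ => by rw [hxab k]; ring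
      have himy : ∀ (i' : Fin d), (A.mulVec y) i'
          = (∑ k, A i' k * a k) + (∑ k, A i' k * b k) := by
        intro i'
        simp only [Matrix.mulVec, dotProduct]
        rw [← Finset.sum_add_distrib]
        exact Finset.sum_congr rfl fun k _ => by rw [← hab k]; ring
      have ex_i : (A.mulVec x) i = α * (Au + s^2 * Bu) := by
        rw [himx i, ← hAu, ← hBu, hβα]; ring
      have ex_j : (A.mulVec x) j = α * (Av + s^2 * Bv) := by
        rw [himx j, ← hAv, ← hBv, hβα]; ring
      have ey_i : (A.mulVec y) i = Au + Bu := by rw [himy i, ← hAu, ← hBu]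
      have ey_j : (A.mulVec y) j = Av + Bv := by rw [himy j, ← hAv, ← hBv]
      rw [ex_i, ex_j, ey_i, ey_j, div_pow]
      rw [div_le_div_iff₀ (by nlinarith [hAx j, hAy i, ex_j, ey_i]) (by positivity)]
      calc α * (Au + s^2*Bu) * (Av + Bv) * (M + m*s)^2
          = α * ((Au + s^2*Bu)*(Av+Bv)*(M+m*s)^2) := by ring
        _ ≤ α * ((s*M+m)^2*(Au+Bu)*(Av+s^2*Bv)) := by
            exact mul_le_mul_of_nonneg_left core hα0.le
        _ = (s*M+m)^2 * (α*(Av+s^2*Bv)*(Au+Bu)) := by ring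
    -- assemble
    have step1 : hilbertDist (A.mulVec x) (A.mulVec y) ≤ Real.log (((s*M+m)/(M+m*s))^2) :=
      hilbert_le_log
        (fun i j => div_pos (mul_pos (hAx i) (hAy j)) (mul_pos (hAx j) (hAy i))) hK
    have step2 : Real.log (((s*M+m)/(M+m*s))^2) ≤ (M-m)/(M+m) * Real.log (β/α) := by
      rw [Real.log_pow]
      have := log_contract hs1 hm hmM
      have e : Real.log (β/α) = 2 * Real.log s := by
        rw [← hs2, Real.log_pow]; push_cast; ring
      rw [e]; push_cast; linarith
    have step3 : Real.log (β/α) ≤ hilbertDist x y := by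
      have e : β/α = (x i0 * y j0) / (x j0 * y i0) := by
        rw [hβ, hα, hr]
        field_simp
      rw [e]
      exact log_le_hilbert (fun i j => div_pos (mul_pos (hx i) (hy j)) (mul_pos (hx j) (hy i))) i0 j0
    calc hilbertDist (A.mulVec x) (A.mulVec y)
        ≤ Real.log (((s*M+m)/(M+m*s))^2) := step1
      _ ≤ (M-m)/(M+m) * Real.log (β/α) := step2
      _ ≤ (M-m)/(M+m) * hilbertDist x y := mul_le_mul_of_nonneg_left step3 hτ


/-- The Birkhoff contraction coefficient. -/
noncomputable def birkhoffCoeff {d : ℕ} (A : Matrix (Fin d) (Fin d) ℝ) : ℝ :=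
  sSup {t : ℝ | ∃ x y : Fin d → ℝ, (∀ i, 0 < x i) ∧ (∀ i, 0 < y i) ∧
    0 < hilbertDist x y ∧ t = hilbertDist (A.mulVec x) (A.mulVec y) / hilbertDist x y}

/-- The forward product `P_m^n = A_m A_{m+1} ⋯ A_n`. -/
def fwdProd {d : ℕ} (A : ℕ → Matrix (Fin d) (Fin d) ℝ) (m n : ℕ) :
    Matrix (Fin d) (Fin d) ℝ :=
  ((List.range' m (n + 1 - m)).map A).prod

/-- The smallest entry of a matrix. -/
noncomputable def minEntry {d : ℕ} (A : Matrix (Fin d) (Fin d) ℝ) : ℝ :=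
  ⨅ p : Fin d × Fin d, A p.1 p.2

/-- The largest entry of a matrix. -/
noncomputable def maxEntry {d : ℕ} (A : Matrix (Fin d) (Fin d) ℝ) : ℝ :=
  ⨆ p : Fin d × Fin d, A p.1 p.2

section entries
variable {d : ℕ} (B : Matrix (Fin d) (Fin d) ℝ)

lemma minEntry_le (i j : Fin d) : minEntry B ≤ B i j :=
  ciInf_le (f := fun p : Fin d × Fin d => B p.1 p.2) ((Set.finite_range _).bddBelow) ⟨i, j⟩

lemma le_maxEntry (i j : Fin d) : B i j ≤ maxEntry B :=
  le_ciSup (f := fun p : Fin d × Fin d => B p.1 p.2) ((Set.finite_range _).bddAbove) ⟨i, j⟩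

lemma minEntry_pos (hd : 0 < d) (hB : ∀ i j, 0 < B i j) : 0 < minEntry B := by
  haveI : Nonempty (Fin d) := ⟨⟨0, hd⟩⟩
  obtain ⟨p, hp⟩ := Finite.exists_min (fun p : Fin d × Fin d => B p.1 p.2)
  exact lt_of_lt_of_le (hB p.1 p.2) (le_ciInf hp)

lemma minEntry_le_maxEntry (hd : 0 < d) : minEntry B ≤ maxEntry B :=
  le_trans (minEntry_le B ⟨0, hd⟩ ⟨0, hd⟩) (le_maxEntry B ⟨0, hd⟩ ⟨0, hd⟩)
end entries

lemma fwdProd_self {d : ℕ} (A : ℕ → Matrix (Fin d) (Fin d) ℝ) (m : ℕ) :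
    fwdProd A m m = A m := by
  unfold fwdProd
  rw [show m + 1 - m = 1 by omega, List.range'_one]
  simp

lemma fwdProd_succ {d : ℕ} (A : ℕ → Matrix (Fin d) (Fin d) ℝ) {m n : ℕ} (h : m ≤ n + 1) :
    fwdProd A m (n + 1) = fwdProd A m n * A (n + 1) := by
  unfold fwdProd
  rw [show n + 1 + 1 - m = (n + 1 - m) + 1 by omega, List.range'_concat,
    List.map_append, List.prod_append, show m + 1 * (n + 1 - m) = n + 1 by omega]
  simp

/-- Upper bound on the Birkhoff coefficient from a uniform contraction estimate. -/
lemma birkhoff_le {d : ℕ} (P : Matrix (Fin d) (Fin d) ℝ) {c : ℝ} (hc : 0 ≤ c)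
    (h : ∀ x y : Fin d → ℝ, (∀ i, 0 < x i) → (∀ i, 0 < y i) →
      hilbertDist (P.mulVec x) (P.mulVec y) ≤ c * hilbertDist x y) :
    birkhoffCoeff P ≤ c := by
  apply Real.sSup_le _ hc
  rintro t ⟨x, y, hx, hy, hD, rfl⟩
  rw [div_le_iff₀ hD]
  exact h x y hx hy

lemma birkhoff_nonneg {d : ℕ} (hd : 0 < d) (P : Matrix (Fin d) (Fin d) ℝ)
    (hP : ∀ i j, 0 < P i j) : 0 ≤ birkhoffCoeff P := by
  haveI : Nonempty (Fin d) := ⟨⟨0, hd⟩⟩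
  apply Real.sSup_nonneg
  rintro t ⟨x, y, hx, hy, hD, rfl⟩
  have hPx : ∀ i, 0 < (P.mulVec x) i := fun i =>
    Finset.sum_pos (fun k _ => mul_pos (hP i k) (hx k)) Finset.univ_nonempty
  have hPy : ∀ i, 0 < (P.mulVec y) i := fun i =>
    Finset.sum_pos (fun k _ => mul_pos (hP i k) (hy k)) Finset.univ_nonempty
  exact div_nonneg (hilbert_nonneg hPx hPy) hD.le

/-- If `∑_n m_n/M_n = ∞` (expressed as non-summability of this
nonnegative series), then `τ(A_m ⋯ A_n) → 0` as `n → ∞`, for every `m`. -/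
theorem stmt7 {d : ℕ} (A : ℕ → Matrix (Fin d) (Fin d) ℝ)
    (hA : ∀ k i j, 0 < A k i j)
    (hdiv : ¬ Summable fun n => minEntry (A n) / maxEntry (A n)) :
    ∀ m, Tendsto (fun n => birkhoffCoeff (fwdProd A m n)) atTop (nhds 0) := by
  intro m
  rcases Nat.eq_zero_or_pos d with hd0 | hd
  · -- degenerate d = 0
    subst hd0
    have hzero : ∀ P : Matrix (Fin 0) (Fin 0) ℝ, birkhoffCoeff P = 0 := by
      intro P
      have hset : {t : ℝ | ∃ x y : Fin 0 → ℝ, (∀ i, 0 < x i) ∧ (∀ i, 0 < y i) ∧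
          0 < hilbertDist x y ∧
          t = hilbertDist (P.mulVec x) (P.mulVec y) / hilbertDist x y} = ∅ := by
        ext t
        simp only [Set.mem_setOf_eq, Set.mem_empty_iff_false, iff_false, not_exists]
        rintro x y ⟨-, -, hD, -⟩
        have : hilbertDist x y = 0 := by
          unfold hilbertDist
          rw [show (⨆ i : Fin 0, ⨆ j : Fin 0, (x i * y j) / (x j * y i)) = 0 from
            Real.iSup_of_isEmpty _, Real.log_zero]
        linarith
      unfold birkhoffCoeff
      rw [hset, Real.sSup_empty]
    simp only [hzero]
    exact tendsto_const_nhds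
  · haveI : Nonempty (Fin d) := ⟨⟨0, hd⟩⟩
    -- per-matrix data
    set θ : ℕ → ℝ := fun k => minEntry (A k) / maxEntry (A k) with hθ
    set τ : ℕ → ℝ := fun k =>
      (maxEntry (A k) - minEntry (A k)) / (maxEntry (A k) + minEntry (A k)) with hτdef
    have hmk : ∀ k, 0 < minEntry (A k) := fun k => minEntry_pos (A k) hd (hA k)
    have hMk : ∀ k, minEntry (A k) ≤ maxEntry (A k) := fun k => minEntry_le_maxEntry (A k) hd
    have hMk0 : ∀ k, 0 < maxEntry (A k) := fun k => lt_of_lt_of_le (hmk k) (hMk k)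
    have hτ0 : ∀ k, 0 ≤ τ k := fun k =>
      div_nonneg (by linarith [hMk k]) (by linarith [hmk k, hMk0 k])
    have hθ0 : ∀ k, 0 ≤ θ k := fun k => div_nonneg (hmk k).le (hMk0 k).le
    have hτexp : ∀ k, τ k ≤ Real.exp (-θ k) := by
      intro k
      have h1 : τ k ≤ 1 - θ k := by
        rw [hτdef, hθ]
        simp only
        rw [one_sub_div (hMk0 k).ne']
        exact div_le_div_of_nonneg_left (by linarith [hMk k]) (hMk0 k) (by linarith [hmk k])
      have h2 := Real.add_one_le_exp (-θ k)
      linarith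
    -- contraction of forward products
    have key : ∀ n, m ≤ n → ∀ x y : Fin d → ℝ, (∀ i, 0 < x i) → (∀ i, 0 < y i) →
        hilbertDist ((fwdProd A m n).mulVec x) ((fwdProd A m n).mulVec y)
          ≤ (∏ k ∈ Finset.Ico m (n+1), τ k) * hilbertDist x y := by
      intro n
      induction n with
      | zero =>
        intro hm x y hx hy
        interval_cases m
        rw [fwdProd_self]
        rw [Finset.prod_Ico_succ_top (le_refl 0), Finset.Ico_self, Finset.prod_empty, one_mul]
        exact hilbert_contract hd (A 0) (hmk 0) (hMk 0)
          (fun i j => minEntry_le (A 0) i j) (fun i j => le_maxEntry (A 0) i j) hx hy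
      | succ n ih =>
        intro hm x y hx hy
        rcases Nat.lt_or_ge n m with hnm | hnm
        · -- n+1 = m : base case
          have hem : m = n + 1 := by omega
          subst hem
          rw [fwdProd_self, Finset.prod_Ico_succ_top (by omega), Finset.Ico_self,
            Finset.prod_empty, one_mul]
          exact hilbert_contract hd (A (n+1)) (hmk (n+1)) (hMk (n+1))
            (fun i j => minEntry_le (A (n+1)) i j) (fun i j => le_maxEntry (A (n+1)) i j) hx hy
        · -- step
          have hAx : ∀ i, 0 < ((A (n+1)).mulVec x) i := fun i =>
            Finset.sum_pos (fun k _ => mul_pos (hA (n+1) i k) (hx k)) Finset.univ_nonempty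
          have hAy : ∀ i, 0 < ((A (n+1)).mulVec y) i := fun i =>
            Finset.sum_pos (fun k _ => mul_pos (hA (n+1) i k) (hy k)) Finset.univ_nonempty
          have hprod0 : 0 ≤ ∏ k ∈ Finset.Ico m (n+1), τ k :=
            Finset.prod_nonneg fun k _ => hτ0 k
          calc hilbertDist ((fwdProd A m (n+1)).mulVec x) ((fwdProd A m (n+1)).mulVec y)
              = hilbertDist ((fwdProd A m n).mulVec ((A (n+1)).mulVec x))
                  ((fwdProd A m n).mulVec ((A (n+1)).mulVec y)) := by
                rw [fwdProd_succ A (by omega), Matrix.mulVec_mulVec, Matrix.mulVec_mulVec]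
            _ ≤ (∏ k ∈ Finset.Ico m (n+1), τ k) *
                  hilbertDist ((A (n+1)).mulVec x) ((A (n+1)).mulVec y) :=
                ih hnm _ _ hAx hAy
            _ ≤ (∏ k ∈ Finset.Ico m (n+1), τ k) * (τ (n+1) * hilbertDist x y) := by
                apply mul_le_mul_of_nonneg_left _ hprod0
                exact hilbert_contract hd (A (n+1)) (hmk (n+1)) (hMk (n+1))
                  (fun i j => minEntry_le (A (n+1)) i j)
                  (fun i j => le_maxEntry (A (n+1)) i j) hx hy
            _ = (∏ k ∈ Finset.Ico m (n+2), τ k) * hilbertDist x y := by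
                rw [Finset.prod_Ico_succ_top (by omega : m ≤ n+1)]
                ring
    -- positivity of forward products
    have hfwdpos : ∀ n, m ≤ n → ∀ i j, 0 < (fwdProd A m n) i j := by
      intro n
      induction n with
      | zero =>
        intro hm i j
        interval_cases m
        rw [fwdProd_self]; exact hA 0 i j
      | succ n ih =>
        intro hm i j
        rcases Nat.lt_or_ge n m with hnm | hnm
        · have hem : m = n + 1 := by omega
          subst hem
          rw [fwdProd_self]; exact hA (n+1) i j
        · rw [fwdProd_succ A (by omega)]
          have : (fwdProd A m n * A (n+1)) i j = ∑ k, (fwdProd A m n) i k * (A (n+1)) k j :=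
            rfl
          rw [this]
          exact Finset.sum_pos (fun k _ => mul_pos (ih hnm i k) (hA (n+1) k j))
            Finset.univ_nonempty
    -- upper bound via exp of partial sums
    have hub : ∀ n, m ≤ n →
        birkhoffCoeff (fwdProd A m n) ≤ Real.exp (-(∑ k ∈ Finset.Ico m (n+1), θ k)) := by
      intro n hn
      have hprod0 : 0 ≤ ∏ k ∈ Finset.Ico m (n+1), τ k := Finset.prod_nonneg fun k _ => hτ0 k
      have h1 : birkhoffCoeff (fwdProd A m n) ≤ ∏ k ∈ Finset.Ico m (n+1), τ k :=
        birkhoff_le _ hprod0 (key n hn)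
      have h2 : (∏ k ∈ Finset.Ico m (n+1), τ k) ≤ ∏ k ∈ Finset.Ico m (n+1), Real.exp (-θ k) :=
        Finset.prod_le_prod (fun k _ => hτ0 k) (fun k _ => hτexp k)
      have h3 : (∏ k ∈ Finset.Ico m (n+1), Real.exp (-θ k))
          = Real.exp (-(∑ k ∈ Finset.Ico m (n+1), θ k)) := by
        rw [← Real.exp_sum, Finset.sum_neg_distrib]
      linarith
    -- divergence of partial sums
    have hT : Tendsto (fun n => ∑ k ∈ Finset.range n, θ k) atTop atTop :=
      (not_summable_iff_tendsto_nat_atTop_of_nonneg hθ0).1 hdiv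
    have hS : Tendsto (fun n => ∑ k ∈ Finset.Ico m (n+1), θ k) atTop atTop := by
      have h1 : Tendsto (fun n => (∑ k ∈ Finset.range (n+1), θ k)
          + (-(∑ k ∈ Finset.range m, θ k))) atTop atTop :=
        tendsto_atTop_add_const_right atTop _ (hT.comp (tendsto_add_atTop_nat 1))
      apply h1.congr'
      filter_upwards [eventually_ge_atTop m] with n hn
      rw [Finset.sum_Ico_eq_sub θ (by omega : m ≤ n+1)]
      ring
    have hexp : Tendsto (fun n => Real.exp (-(∑ k ∈ Finset.Ico m (n+1), θ k))) atTop (nhds 0) :=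
      Real.tendsto_exp_atBot.comp (tendsto_neg_atTop_atBot.comp hS)
    -- squeeze
    apply tendsto_of_tendsto_of_tendsto_of_le_of_le' tendsto_const_nhds hexp
    · filter_upwards [eventually_ge_atTop m] with n hn
      exact birkhoff_nonneg hd _ (hfwdpos n hn)
    · filter_upwards [eventually_ge_atTop m] with n hn
      exact hub n hn
end

section
/- Let {F_n}_{n≥1} be a sequence of d×d real matrices all of whose entries are ≥ 1, and suppose there is a constant C > 0 such that ‖F_n‖₁ ≤ C·n for all sufficiently large n, where ‖F‖₁ = ∑_{i,j} |f_{ij}| is the entrywise 1-norm. Then τ(F_n F_{n-1} ⋯ F_m) → 0 as n → ∞, for every m ≥ 1. -/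
open Filter

/-- The backward (decreasing-index) product `F_n F_{n-1} ⋯ F_m`. -/
def revProd {d : ℕ} (F : ℕ → Matrix (Fin d) (Fin d) ℝ) (m n : ℕ) :
    Matrix (Fin d) (Fin d) ℝ :=
  (((List.range' m (n + 1 - m)).map F).reverse).prod

/-- The entrywise 1-norm `‖F‖₁ = ∑_{i,j} |f_{ij}|`. -/
def norm1 {d : ℕ} (F : Matrix (Fin d) (Fin d) ℝ) : ℝ :=
  ∑ i, ∑ j, |F i j|

/-! ### Auxiliary lemmas -/

private lemma finNonempty {d : ℕ} [NeZero d] : Nonempty (Fin d) :=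
  ⟨⟨0, Nat.pos_of_ne_zero (NeZero.ne d)⟩⟩

/-- The scalar inequality at the heart of Birkhoff's theorem:
`N·ρ + 1 ≤ ρ^((N-1)/(N+1)) · (N + ρ)` for `N, ρ ≥ 1`. -/
private lemma scalarIneq (N ρ : ℝ) (hN : 1 ≤ N) (hρ : 1 ≤ ρ) :
    N * ρ + 1 ≤ ρ ^ ((N - 1) / (N + 1)) * (N + ρ) := by
  have hN0 : (0:ℝ) < N := lt_of_lt_of_le one_pos hN
  set lam := (N - 1) / (N + 1) with hlam
  set g : ℝ → ℝ := fun s => lam * s + Real.log (N + Real.exp s)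
    - Real.log (N * Real.exp s + 1) with hg
  have hpos1 : ∀ s : ℝ, 0 < N + Real.exp s := fun s => by positivity
  have hpos2 : ∀ s : ℝ, 0 < N * Real.exp s + 1 := fun s => by positivity
  have hderiv : ∀ s : ℝ, HasDerivAt g
      (lam + Real.exp s / (N + Real.exp s) - N * Real.exp s / (N * Real.exp s + 1)) s := by
    intro s
    have h1 : HasDerivAt (fun s : ℝ => N + Real.exp s) (Real.exp s) s :=
      (Real.hasDerivAt_exp s).const_add N
    have h2 : HasDerivAt (fun s : ℝ => Real.log (N + Real.exp s))
        (Real.exp s / (N + Real.exp s)) s := by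
      have := (Real.hasDerivAt_log (hpos1 s).ne').comp s h1
      simpa [div_eq_inv_mul, Function.comp_def] using this
    have h3 : HasDerivAt (fun s : ℝ => N * Real.exp s + 1) (N * Real.exp s) s :=
      ((Real.hasDerivAt_exp s).const_mul N).add_const 1
    have h4 : HasDerivAt (fun s : ℝ => Real.log (N * Real.exp s + 1))
        (N * Real.exp s / (N * Real.exp s + 1)) s := by
      have := (Real.hasDerivAt_log (hpos2 s).ne').comp s h3
      simpa [div_eq_inv_mul, Function.comp_def] using this
    have h5 : HasDerivAt (fun s : ℝ => lam * s) lam s := by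
      simpa using (hasDerivAt_id s).const_mul lam
    exact (h5.add h2).sub h4
  have hd0 : ∀ s : ℝ,
      0 ≤ lam + Real.exp s / (N + Real.exp s) - N * Real.exp s / (N * Real.exp s + 1) := by
    intro s
    have hu0 : 0 < Real.exp s := Real.exp_pos s
    set u := Real.exp s with hu
    have key : lam + u / (N + u) - N * u / (N * u + 1)
        = (N - 1) * N * (u - 1) ^ 2 / ((N + 1) * ((N + u) * (N * u + 1))) := by
      rw [hlam]
      have e1 : N + 1 ≠ 0 := by positivity
      have e2 : N + u ≠ 0 := by positivity
      have e3 : N * u + 1 ≠ 0 := by positivity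
      field_simp
      ring
    rw [key]
    apply div_nonneg
    · have : 0 ≤ N - 1 := by linarith
      positivity
    · positivity
  have hmono : Monotone g := by
    apply monotone_of_deriv_nonneg
    · exact fun s => (hderiv s).differentiableAt
    · intro s; rw [(hderiv s).deriv]; exact hd0 s
  have h0 : g 0 = 0 := by simp [hg]
  have hρ0 : (0:ℝ) < ρ := lt_of_lt_of_le one_pos hρ
  have hsle : g 0 ≤ g (Real.log ρ) := hmono (Real.log_nonneg hρ)
  rw [h0] at hsle
  simp only [hg, Real.exp_log hρ0] at hsle
  have hlog : Real.log (N * ρ + 1) ≤ lam * Real.log ρ + Real.log (N + ρ) := by linarith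
  calc N * ρ + 1 = Real.exp (Real.log (N * ρ + 1)) := (Real.exp_log (by positivity)).symm
    _ ≤ Real.exp (lam * Real.log ρ + Real.log (N + ρ)) := Real.exp_le_exp.2 hlog
    _ = ρ ^ lam * (N + ρ) := by
        rw [Real.exp_add, Real.exp_log (by positivity), Real.rpow_def_of_pos hρ0,
          mul_comm (Real.log ρ) lam]

/-- An upward parabola nonpositive at both ends of an interval is nonpositive inside. -/
private lemma quadratic_step (Aq Bq Cq w W : ℝ) (hA : 0 ≤ Aq) (hw0 : 0 ≤ w) (hwW : w ≤ W)
    (h0 : Cq ≤ 0) (hW : Aq * W ^ 2 + Bq * W + Cq ≤ 0) :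
    Aq * w ^ 2 + Bq * w + Cq ≤ 0 := by
  rcases eq_or_lt_of_le (le_trans hw0 hwW) with hW0 | hW0
  · have hw : w = 0 := le_antisymm (hW0 ▸ hwW) hw0
    simpa [hw] using h0
  · have h1 : w * (Aq * W ^ 2 + Bq * W + Cq) ≤ 0 := mul_nonpos_of_nonneg_of_nonpos hw0 hW
    have h2 : (W - w) * Cq ≤ 0 := mul_nonpos_of_nonneg_of_nonpos (sub_nonneg.2 hwW) h0
    have h3 : 0 ≤ Aq * (w * W * (W - w)) :=
      mul_nonneg hA (mul_nonneg (mul_nonneg hw0 (le_of_lt hW0)) (sub_nonneg.2 hwW))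
    have h4 : W * (Aq * w ^ 2 + Bq * w + Cq) ≤ 0 := by
      have hid : W * (Aq * w ^ 2 + Bq * w + Cq)
          = w * (Aq * W ^ 2 + Bq * W + Cq) + (W - w) * Cq - Aq * (w * W * (W - w)) := by
        ring
      rw [hid]
      linarith
    nlinarith [h4]

/-- The four-variable inequality underlying the two-row comparison. -/
private lemma starIneq (α β M K a₁ a₂ b₁ b₂ : ℝ) (hα : 0 < α) (hαβ : α ≤ β)
    (hM : 1 ≤ M) (hK : 0 ≤ K)
    (ha₁ : 0 ≤ a₁) (ha₂ : 0 ≤ a₂) (hb₁ : 0 ≤ b₁) (hb₂ : 0 ≤ b₂)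
    (hcross : a₂ * b₁ ≤ K * (a₁ * b₂))
    (hkey : (Real.sqrt K * Real.sqrt β + Real.sqrt α) ^ 2
      ≤ M * (Real.sqrt K * Real.sqrt α + Real.sqrt β) ^ 2) :
    (α * a₁ + β * a₂) * (b₁ + b₂) ≤ M * ((α * b₁ + β * b₂) * (a₁ + a₂)) := by
  have hβ0 : 0 < β := lt_of_lt_of_le hα hαβ
  set X := a₁ * b₁ with hX
  set Y := a₁ * b₂ with hY
  set Z := a₂ * b₁ with hZ
  set W := a₂ * b₂ with hW
  have hX0 : 0 ≤ X := mul_nonneg ha₁ hb₁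
  have hY0 : 0 ≤ Y := mul_nonneg ha₁ hb₂
  have hZ0 : 0 ≤ Z := mul_nonneg ha₂ hb₁
  have hW0 : 0 ≤ W := mul_nonneg ha₂ hb₂
  have hXW : X * W = Y * Z := by rw [hX, hY, hZ, hW]; ring
  set p := Real.sqrt Y with hp
  set w := Real.sqrt Z with hwdef
  have hp0 : 0 ≤ p := Real.sqrt_nonneg _
  have hw0 : 0 ≤ w := Real.sqrt_nonneg _
  have hp2 : p ^ 2 = Y := Real.sq_sqrt hY0
  have hw2 : w ^ 2 = Z := Real.sq_sqrt hZ0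
  have hwp : w ≤ Real.sqrt K * p := by
    rw [hwdef, hp, ← Real.sqrt_mul hK]
    exact Real.sqrt_le_sqrt hcross
  -- the main claim
  have claim : α * Y + β * Z ≤ M * β * Y + M * α * Z
      + 2 * (M - 1) * (Real.sqrt α * Real.sqrt β) * (p * w) := by
    have hMβα : 0 ≤ M * β - α := by nlinarith [mul_nonneg (sub_nonneg.2 hM) hβ0.le]
    rcases le_or_gt β (M * α) with hc | hc
    · have c1 : 0 ≤ (M * β - α) * Y := mul_nonneg hMβα hY0
      have c2 : 0 ≤ (M * α - β) * Z := mul_nonneg (by linarith) hZ0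
      have c3 : 0 ≤ 2 * (M - 1) * (Real.sqrt α * Real.sqrt β) * (p * w) := by
        have : (0:ℝ) ≤ M - 1 := by linarith
        positivity
      linarith
    · -- use the quadratic bound
      have hsk2 : Real.sqrt K ^ 2 = K := Real.sq_sqrt hK
      have hsa2 : Real.sqrt α ^ 2 = α := Real.sq_sqrt hα.le
      have hsb2 : Real.sqrt β ^ 2 = β := Real.sq_sqrt hβ0.le
      have hbr : (β - M * α) * K - 2 * (M - 1) * (Real.sqrt α * Real.sqrt β) * Real.sqrt K
          + (α - M * β) ≤ 0 := by
        have e : (β - M * α) * K - 2 * (M - 1) * (Real.sqrt α * Real.sqrt β) * Real.sqrt K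
            + (α - M * β)
            = (Real.sqrt K * Real.sqrt β + Real.sqrt α) ^ 2
              - M * (Real.sqrt K * Real.sqrt α + Real.sqrt β) ^ 2 := by
          linear_combination (-(β - M * α)) * hsk2
            + (-(1 - M * Real.sqrt K ^ 2)) * hsa2
            + (-(Real.sqrt K ^ 2 - M)) * hsb2
        rw [e]
        linarith [hkey]
      have hq0' : (α - M * β) * p ^ 2 ≤ 0 :=
        mul_nonpos_of_nonpos_of_nonneg (by nlinarith [mul_nonneg (sub_nonneg.2 hM) hβ0.le])
          (sq_nonneg p)
      have hqW : (β - M * α) * (Real.sqrt K * p) ^ 2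
          + (-(2 * (M - 1) * (Real.sqrt α * Real.sqrt β) * p)) * (Real.sqrt K * p)
          + (α - M * β) * p ^ 2 ≤ 0 := by
        have e : (β - M * α) * (Real.sqrt K * p) ^ 2
            + (-(2 * (M - 1) * (Real.sqrt α * Real.sqrt β) * p)) * (Real.sqrt K * p)
            + (α - M * β) * p ^ 2
            = ((β - M * α) * K - 2 * (M - 1) * (Real.sqrt α * Real.sqrt β) * Real.sqrt K
              + (α - M * β)) * p ^ 2 := by
          rw [mul_pow, hsk2]
          ring
        rw [e]
        exact mul_nonpos_of_nonpos_of_nonneg hbr (sq_nonneg p)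
      have hq := quadratic_step (β - M * α)
        (-(2 * (M - 1) * (Real.sqrt α * Real.sqrt β) * p)) ((α - M * β) * p ^ 2)
        w (Real.sqrt K * p) (by linarith) hw0 hwp hq0' hqW
      have hq' : (β - M * α) * Z - 2 * (M - 1) * (Real.sqrt α * Real.sqrt β) * p * w
          + (α - M * β) * Y ≤ 0 := by
        rw [← hp2, ← hw2]
        linarith [hq]
      linarith [hq']
  -- AM-GM : α X + β W ≥ 2 √α √β p w
  have hsqrtXW : Real.sqrt X * Real.sqrt W = p * w := by
    rw [← Real.sqrt_mul hX0, hXW, Real.sqrt_mul hY0]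
  have amgm : 2 * (Real.sqrt α * Real.sqrt β) * (p * w) ≤ α * X + β * W := by
    have h1 : Real.sqrt (α * X) * Real.sqrt (β * W)
        = (Real.sqrt α * Real.sqrt β) * (p * w) := by
      rw [Real.sqrt_mul hα.le, Real.sqrt_mul hβ0.le]
      rw [show Real.sqrt α * Real.sqrt X * (Real.sqrt β * Real.sqrt W)
        = Real.sqrt α * Real.sqrt β * (Real.sqrt X * Real.sqrt W) by ring, hsqrtXW]
    have hu2 : Real.sqrt (α * X) ^ 2 = α * X := Real.sq_sqrt (mul_nonneg hα.le hX0)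
    have hv2 : Real.sqrt (β * W) ^ 2 = β * W := Real.sq_sqrt (mul_nonneg hβ0.le hW0)
    have hsq := sq_nonneg (Real.sqrt (α * X) - Real.sqrt (β * W))
    have hexp : Real.sqrt (α * X) ^ 2 - 2 * (Real.sqrt (α * X) * Real.sqrt (β * W))
        + Real.sqrt (β * W) ^ 2 = (Real.sqrt (α * X) - Real.sqrt (β * W)) ^ 2 := by ring
    rw [← hexp, hu2, hv2, h1] at hsq
    linarith
  have step2 : 2 * (M - 1) * (Real.sqrt α * Real.sqrt β) * (p * w)
      ≤ (M - 1) * (α * X + β * W) := by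
    have hM1 : (0:ℝ) ≤ M - 1 := by linarith
    calc 2 * (M - 1) * (Real.sqrt α * Real.sqrt β) * (p * w)
        = (M - 1) * (2 * (Real.sqrt α * Real.sqrt β) * (p * w)) := by ring
      _ ≤ (M - 1) * (α * X + β * W) := mul_le_mul_of_nonneg_left amgm hM1
  have goal' : α * X + α * Y + β * Z + β * W
      ≤ M * (α * X + β * Y + α * Z + β * W) := by linarith
  calc (α * a₁ + β * a₂) * (b₁ + b₂) = α * X + α * Y + β * Z + β * W := by
        rw [hX, hY, hZ, hW]; ring
    _ ≤ M * (α * X + β * Y + α * Z + β * W) := goal'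
    _ = M * ((α * b₁ + β * b₂) * (a₁ + a₂)) := by rw [hX, hY, hZ, hW]; ring

private lemma bdd1 {d : ℕ} (f : Fin d → ℝ) : BddAbove (Set.range f) :=
  (Set.finite_range f).bddAbove

private lemma one_le_sup {d : ℕ} [NeZero d] {x y : Fin d → ℝ}
    (hx : ∀ i, 0 < x i) (hy : ∀ i, 0 < y i) :
    1 ≤ ⨆ i : Fin d, ⨆ j : Fin d, (x i * y j) / (x j * y i) := by
  haveI := finNonempty (d := d)
  obtain ⟨i₀⟩ := finNonempty (d := d)
  have h1 : (x i₀ * y i₀) / (x i₀ * y i₀) = 1 :=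
    div_self (ne_of_gt (mul_pos (hx i₀) (hy i₀)))
  calc (1:ℝ) = (x i₀ * y i₀) / (x i₀ * y i₀) := h1.symm
    _ ≤ ⨆ j, (x i₀ * y j) / (x j * y i₀) :=
        le_ciSup (f := fun j => (x i₀ * y j) / (x j * y i₀)) (bdd1 _) i₀
    _ ≤ ⨆ i, ⨆ j, (x i * y j) / (x j * y i) :=
        le_ciSup (f := fun i => ⨆ j, (x i * y j) / (x j * y i)) (bdd1 _) i₀

private lemma hilbertDist_nonneg {d : ℕ} [NeZero d] {x y : Fin d → ℝ}
    (hx : ∀ i, 0 < x i) (hy : ∀ i, 0 < y i) : 0 ≤ hilbertDist x y :=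
  Real.log_nonneg (one_le_sup hx hy)

private lemma hilbertDist_le {d : ℕ} [NeZero d] {x y : Fin d → ℝ} {c : ℝ}
    (hx : ∀ i, 0 < x i) (hy : ∀ i, 0 < y i)
    (h : ∀ i j, (x i * y j) / (x j * y i) ≤ Real.exp c) : hilbertDist x y ≤ c := by
  haveI := finNonempty (d := d)
  have hsup : (⨆ i : Fin d, ⨆ j : Fin d, (x i * y j) / (x j * y i)) ≤ Real.exp c :=
    ciSup_le fun i => ciSup_le fun j => h i j
  have hpos : (0:ℝ) < ⨆ i : Fin d, ⨆ j : Fin d, (x i * y j) / (x j * y i) :=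
    lt_of_lt_of_le one_pos (one_le_sup hx hy)
  calc hilbertDist x y ≤ Real.log (Real.exp c) := Real.log_le_log hpos hsup
    _ = c := Real.log_exp c

private lemma hilbertDist_eq {d : ℕ} [NeZero d] {x y : Fin d → ℝ}
    (hx : ∀ i, 0 < x i) (hy : ∀ i, 0 < y i)
    {i₀ j₀ : Fin d} (hmax : ∀ k, x k / y k ≤ x i₀ / y i₀)
    (hmin : ∀ k, x j₀ / y j₀ ≤ x k / y k) :
    hilbertDist x y = Real.log ((x i₀ / y i₀) / (x j₀ / y j₀)) := by
  haveI : Nonempty (Fin d) := ⟨i₀⟩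
  unfold hilbertDist
  congr 1
  have hterm : ∀ i j : Fin d, (x i * y j) / (x j * y i) = (x i / y i) / (x j / y j) := by
    intro i j
    rw [div_div_eq_mul_div, div_mul_eq_mul_div, div_div, mul_comm (y i) (x j)]
  apply le_antisymm
  · refine ciSup_le fun i => ciSup_le fun j => ?_
    rw [hterm i j]
    exact div_le_div₀ (le_of_lt (div_pos (hx i₀) (hy i₀))) (hmax i)
      (div_pos (hx j₀) (hy j₀)) (hmin j)
  · calc (x i₀ / y i₀) / (x j₀ / y j₀) = (x i₀ * y j₀) / (x j₀ * y i₀) := (hterm i₀ j₀).symm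
      _ ≤ ⨆ j, (x i₀ * y j) / (x j * y i₀) :=
          le_ciSup (f := fun j => (x i₀ * y j) / (x j * y i₀)) (bdd1 _) j₀
      _ ≤ ⨆ i, ⨆ j, (x i * y j) / (x j * y i) :=
          le_ciSup (f := fun i => ⨆ j, (x i * y j) / (x j * y i)) (bdd1 _) i₀

private lemma mulVec_pos {d : ℕ} [NeZero d] {A : Matrix (Fin d) (Fin d) ℝ}
    (hA : ∀ i j, 1 ≤ A i j) {x : Fin d → ℝ} (hx : ∀ i, 0 < x i) :
    ∀ i, 0 < A.mulVec x i := by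
  haveI := finNonempty (d := d)
  intro i
  have : A.mulVec x i = ∑ k, A i k * x k := rfl
  rw [this]
  exact Finset.sum_pos
    (fun k _ => mul_pos (lt_of_lt_of_le one_pos (hA i k)) (hx k)) Finset.univ_nonempty

/-- The core Birkhoff contraction lemma: a matrix with entries in `[1, N]`
contracts the Hilbert metric by a factor `(N-1)/(N+1)`. -/
private lemma key_contract {d : ℕ} [NeZero d] (A : Matrix (Fin d) (Fin d) ℝ) (N : ℝ)
    (hN : 1 ≤ N) (h1 : ∀ i j, 1 ≤ A i j) (h2 : ∀ i j, A i j ≤ N)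
    {x y : Fin d → ℝ} (hx : ∀ i, 0 < x i) (hy : ∀ i, 0 < y i) :
    hilbertDist (A.mulVec x) (A.mulVec y) ≤ (N - 1) / (N + 1) * hilbertDist x y := by
  haveI := finNonempty (d := d)
  have hN0 : (0:ℝ) < N := lt_of_lt_of_le one_pos hN
  obtain ⟨i₀, hmax⟩ := Finite.exists_max (fun k : Fin d => x k / y k)
  obtain ⟨j₀, hmin⟩ := Finite.exists_min (fun k : Fin d => x k / y k)
  have hα : 0 < x j₀ / y j₀ := div_pos (hx j₀) (hy j₀)
  set α := x j₀ / y j₀ with hαdef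
  set β := x i₀ / y i₀ with hβdef
  have hαβ : α ≤ β := hmin i₀
  have hβ0 : 0 < β := lt_of_lt_of_le hα hαβ
  have hr1 : 1 ≤ β / α := (one_le_div hα).2 hαβ
  have hr0 : 0 < β / α := div_pos hβ0 hα
  rw [hilbertDist_eq hx hy hmax hmin]
  set lam := (N - 1) / (N + 1) with hlam
  have hlam0 : 0 ≤ lam := div_nonneg (by linarith) (by linarith)
  set M := Real.exp (lam * Real.log (β / α)) with hMdef
  have hM1 : 1 ≤ M := Real.one_le_exp (mul_nonneg hlam0 (Real.log_nonneg hr1))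
  -- the square-root key inequality
  have hkey : (Real.sqrt (N * N) * Real.sqrt β + Real.sqrt α) ^ 2
      ≤ M * (Real.sqrt (N * N) * Real.sqrt α + Real.sqrt β) ^ 2 := by
    rw [Real.sqrt_mul_self hN0.le]
    have hsa : 0 < Real.sqrt α := Real.sqrt_pos.2 hα
    have hsb : 0 ≤ Real.sqrt β := Real.sqrt_nonneg β
    set ρ := Real.sqrt (β / α) with hρdef
    have hρ1 : 1 ≤ ρ := by
      rw [hρdef, ← Real.sqrt_one]
      exact Real.sqrt_le_sqrt hr1
    have hρ0 : 0 < ρ := lt_of_lt_of_le one_pos hρ1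
    have hS := scalarIneq N ρ hN hρ1
    have hρe : ρ = Real.sqrt β / Real.sqrt α := by
      rw [hρdef, Real.sqrt_div hβ0.le]
    have hmul := mul_le_mul_of_nonneg_right hS hsa.le
    have e1 : (N * ρ + 1) * Real.sqrt α = N * Real.sqrt β + Real.sqrt α := by
      rw [hρe]; field_simp
    have e2 : ρ ^ lam * (N + ρ) * Real.sqrt α
        = ρ ^ lam * (N * Real.sqrt α + Real.sqrt β) := by
      rw [hρe]; field_simp
    rw [e1, e2] at hmul
    have hsq := mul_le_mul hmul hmul (by positivity) (by positivity)
    have hMe : (ρ ^ lam) * (ρ ^ lam) = M := by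
      rw [hMdef, hρdef, Real.rpow_def_of_pos (Real.sqrt_pos.2 hr0), ← Real.exp_add,
        Real.log_sqrt hr0.le]
      congr 1
      ring
    calc (N * Real.sqrt β + Real.sqrt α) ^ 2
        = (N * Real.sqrt β + Real.sqrt α) * (N * Real.sqrt β + Real.sqrt α) := sq _
      _ ≤ (ρ ^ lam * (N * Real.sqrt α + Real.sqrt β))
          * (ρ ^ lam * (N * Real.sqrt α + Real.sqrt β)) := hsq
      _ = M * (N * Real.sqrt α + Real.sqrt β) ^ 2 := by rw [← hMe]; ring
  -- entrywise comparison
  have hP : ∀ i j : Fin d, A.mulVec x i * A.mulVec y j ≤ M * (A.mulVec x j * A.mulVec y i) := by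
    intro i j
    rcases eq_or_lt_of_le hαβ with heq | hlt
    · -- x is proportional to y
      have hxy : x = α • y := by
        funext k
        have h1k : x k / y k = α := le_antisymm (heq ▸ hmax k) (hmin k)
        have := (div_eq_iff (hy k).ne').1 h1k
        simpa [Pi.smul_apply, smul_eq_mul, mul_comm] using this
      rw [hxy, Matrix.mulVec_smul]
      simp only [Pi.smul_apply, smul_eq_mul]
      have hyi := mulVec_pos h1 hy i
      have hyj := mulVec_pos h1 hy j
      nlinarith [mul_pos hyi hyj, mul_pos hα (mul_pos hyi hyj)]
    · -- genuine two-row argument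
      have hβα : 0 < β - α := by linarith
      set u : Fin d → ℝ := fun k => (β - x k / y k) / (β - α) with hu
      set w : Fin d → ℝ := fun k => (x k / y k - α) / (β - α) with hw
      have hu0 : ∀ k, 0 ≤ u k := fun k => div_nonneg (by linarith [hmax k]) hβα.le
      have hw0 : ∀ k, 0 ≤ w k := fun k => div_nonneg (by linarith [hmin k]) hβα.le
      have huw : ∀ k, u k + w k = 1 := by
        intro k
        rw [hu, hw]
        field_simp
        ring
      have hxk : ∀ k, x k = (α * u k + β * w k) * y k := by
        intro k
        have e : α * u k + β * w k = x k / y k := by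
          rw [hu, hw]; field_simp; ring
        rw [e, div_mul_cancel₀ _ (hy k).ne']
      have ex : ∀ r : Fin d,
          A.mulVec x r = α * (∑ k, A r k * u k * y k) + β * (∑ k, A r k * w k * y k) := by
        intro r
        have : A.mulVec x r = ∑ k, A r k * x k := rfl
        rw [this, Finset.mul_sum, Finset.mul_sum, ← Finset.sum_add_distrib]
        apply Finset.sum_congr rfl
        intro k _
        rw [hxk k]; ring
      have ey : ∀ r : Fin d,
          A.mulVec y r = (∑ k, A r k * u k * y k) + (∑ k, A r k * w k * y k) := by
        intro r
        have : A.mulVec y r = ∑ k, A r k * y k := rfl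
        rw [this, ← Finset.sum_add_distrib]
        apply Finset.sum_congr rfl
        intro k _
        linear_combination (-(A r k * y k)) * huw k
      have hnn : ∀ (r : Fin d) (v : Fin d → ℝ), (∀ k, 0 ≤ v k) →
          0 ≤ ∑ k, A r k * v k * y k := by
        intro r v hv
        exact Finset.sum_nonneg fun k _ =>
          mul_nonneg (mul_nonneg (le_trans zero_le_one (h1 r k)) (hv k)) (hy k).le
      have hcross : (∑ k, A i k * w k * y k) * (∑ k, A j k * u k * y k)
          ≤ (N * N) * ((∑ k, A i k * u k * y k) * (∑ k, A j k * w k * y k)) := by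
        rw [Finset.sum_mul_sum]
        have hR : (∑ k, A i k * u k * y k) * (∑ l, A j l * w l * y l)
            = ∑ k, ∑ l, (A i l * u l * y l) * (A j k * w k * y k) := by
          rw [Finset.sum_mul_sum]
          exact Finset.sum_comm
        rw [hR, Finset.mul_sum]
        apply Finset.sum_le_sum
        intro k _
        rw [Finset.mul_sum]
        apply Finset.sum_le_sum
        intro l _
        have base : A i k * A j l ≤ N * N * (A i l * A j k) := by
          have t1 : A i k * A j l ≤ N * N :=
            mul_le_mul (h2 i k) (h2 j l) (le_trans zero_le_one (h1 j l)) hN0.le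
          have t2 : (1:ℝ) ≤ A i l * A j k := by
            have := mul_le_mul (h1 i l) (h1 j k) zero_le_one
              (le_trans zero_le_one (h1 i l))
            simpa using this
          have t3 : N * N ≤ N * N * (A i l * A j k) :=
            le_mul_of_one_le_right (by positivity) t2
          linarith
        have hrest : 0 ≤ w k * y k * (u l * y l) :=
          mul_nonneg (mul_nonneg (hw0 k) (hy k).le) (mul_nonneg (hu0 l) (hy l).le)
        calc A i k * w k * y k * (A j l * u l * y l)
            = (A i k * A j l) * (w k * y k * (u l * y l)) := by ring
          _ ≤ (N * N * (A i l * A j k)) * (w k * y k * (u l * y l)) :=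
              mul_le_mul_of_nonneg_right base hrest
          _ = N * N * (A i l * u l * y l * (A j k * w k * y k)) := by ring
      rw [ex i, ey j, ex j, ey i]
      exact starIneq α β M (N * N) _ _ _ _ hα hαβ hM1 (by positivity)
        (hnn i u hu0) (hnn i w hw0) (hnn j u hu0) (hnn j w hw0) hcross hkey
  -- conclude
  apply hilbertDist_le (mulVec_pos h1 hx) (mulVec_pos h1 hy)
  intro i j
  rw [div_le_iff₀ (mul_pos (mulVec_pos h1 hx j) (mulVec_pos h1 hy i))]
  calc A.mulVec x i * A.mulVec y j ≤ M * (A.mulVec x j * A.mulVec y i) := hP i j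
    _ = Real.exp (lam * Real.log (β / α)) * (A.mulVec x j * A.mulVec y i) := by rw [hMdef]

private lemma revProd_self {d : ℕ} (F : ℕ → Matrix (Fin d) (Fin d) ℝ) (m : ℕ) :
    revProd F m m = F m := by
  unfold revProd
  have h : m + 1 - m = 1 := by omega
  rw [h, List.range'_one]
  simp

private lemma revProd_succ {d : ℕ} (F : ℕ → Matrix (Fin d) (Fin d) ℝ) (m n : ℕ)
    (h : m ≤ n + 1) : revProd F m (n + 1) = F (n + 1) * revProd F m n := by
  unfold revProd
  have h1 : n + 1 + 1 - m = (n + 1 - m) + 1 := by omega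
  rw [h1, List.range'_concat]
  have h2 : m + 1 * (n + 1 - m) = n + 1 := by omega
  rw [h2, List.map_append, List.reverse_append]
  simp

private lemma revProd_entries {d : ℕ} [NeZero d] (F : ℕ → Matrix (Fin d) (Fin d) ℝ)
    (hF : ∀ n i j, 1 ≤ F n i j) (m : ℕ) :
    ∀ n, m ≤ n → ∀ i j, 1 ≤ revProd F m n i j := by
  haveI := finNonempty (d := d)
  intro n hn
  induction n, hn using Nat.le_induction with
  | base => rw [revProd_self]; exact hF m
  | succ n hmn ih =>
    intro i j
    rw [revProd_succ F m n (by omega), Matrix.mul_apply]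
    obtain ⟨k₀⟩ := finNonempty (d := d)
    have hterm : (1:ℝ) ≤ F (n + 1) i k₀ * revProd F m n k₀ j := by
      nlinarith [hF (n + 1) i k₀, ih k₀ j]
    refine le_trans hterm (Finset.single_le_sum
      (f := fun k => F (n + 1) i k * revProd F m n k j) (fun k _ => ?_)
      (Finset.mem_univ k₀))
    exact mul_nonneg (by linarith [hF (n + 1) i k]) (by linarith [ih k j])

private lemma one_le_norm1 {d : ℕ} [NeZero d] {A : Matrix (Fin d) (Fin d) ℝ}
    (hA : ∀ i j, 1 ≤ A i j) : 1 ≤ norm1 A := by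
  obtain ⟨i⟩ := finNonempty (d := d)
  unfold norm1
  calc (1:ℝ) ≤ |A i i| := by rw [abs_of_nonneg (by linarith [hA i i])]; exact hA i i
    _ ≤ ∑ j, |A i j| := Finset.single_le_sum (f := fun j => |A i j|)
        (fun j _ => abs_nonneg _) (Finset.mem_univ i)
    _ ≤ ∑ i, ∑ j, |A i j| := Finset.single_le_sum (f := fun i => ∑ j, |A i j|)
        (fun i _ => Finset.sum_nonneg fun j _ => abs_nonneg _) (Finset.mem_univ i)

private lemma entry_le_norm1 {d : ℕ} {A : Matrix (Fin d) (Fin d) ℝ}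
    (hA : ∀ i j, 1 ≤ A i j) (i j : Fin d) : A i j ≤ norm1 A := by
  unfold norm1
  calc A i j = |A i j| := (abs_of_nonneg (by linarith [hA i j])).symm
    _ ≤ ∑ j, |A i j| := Finset.single_le_sum (f := fun j => |A i j|)
        (fun j _ => abs_nonneg _) (Finset.mem_univ j)
    _ ≤ ∑ i, ∑ j, |A i j| := Finset.single_le_sum (f := fun i => ∑ j, |A i j|)
        (fun i _ => Finset.sum_nonneg fun j _ => abs_nonneg _) (Finset.mem_univ i)

private lemma prod_contract {d : ℕ} [NeZero d] (F : ℕ → Matrix (Fin d) (Fin d) ℝ)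
    (hF : ∀ n i j, 1 ≤ F n i j) (m : ℕ) :
    ∀ n, m ≤ n → ∀ x y : Fin d → ℝ, (∀ i, 0 < x i) → (∀ i, 0 < y i) →
      hilbertDist ((revProd F m n).mulVec x) ((revProd F m n).mulVec y)
        ≤ (∏ k ∈ Finset.Icc m n, (norm1 (F k) - 1) / (norm1 (F k) + 1)) * hilbertDist x y := by
  intro n hn
  induction n, hn using Nat.le_induction with
  | base =>
    intro x y hx hy
    rw [revProd_self, Finset.Icc_self, Finset.prod_singleton]
    exact key_contract (F m) (norm1 (F m)) (one_le_norm1 (hF m)) (hF m)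
      (entry_le_norm1 (hF m)) hx hy
  | succ n hmn ih =>
    intro x y hx hy
    have hlamk : ∀ k : ℕ, 0 ≤ (norm1 (F k) - 1) / (norm1 (F k) + 1) := by
      intro k
      haveI := finNonempty (d := d)
      have := one_le_norm1 (hF k)
      exact div_nonneg (by linarith) (by linarith)
    have hBpos := revProd_entries F hF m n hmn
    have hBx := mulVec_pos hBpos hx
    have hBy := mulVec_pos hBpos hy
    rw [revProd_succ F m n (by omega), ← Matrix.mulVec_mulVec, ← Matrix.mulVec_mulVec]
    calc hilbertDist ((F (n+1)).mulVec ((revProd F m n).mulVec x))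
          ((F (n+1)).mulVec ((revProd F m n).mulVec y))
        ≤ (norm1 (F (n+1)) - 1) / (norm1 (F (n+1)) + 1)
          * hilbertDist ((revProd F m n).mulVec x) ((revProd F m n).mulVec y) :=
          key_contract (F (n+1)) (norm1 (F (n+1))) (one_le_norm1 (hF (n+1))) (hF (n+1))
            (entry_le_norm1 (hF (n+1))) hBx hBy
      _ ≤ (norm1 (F (n+1)) - 1) / (norm1 (F (n+1)) + 1)
          * ((∏ k ∈ Finset.Icc m n, (norm1 (F k) - 1) / (norm1 (F k) + 1))
            * hilbertDist x y) :=
          mul_le_mul_of_nonneg_left (ih x y hx hy) (hlamk (n+1))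
      _ = (∏ k ∈ Finset.Icc m (n+1), (norm1 (F k) - 1) / (norm1 (F k) + 1))
          * hilbertDist x y := by
          rw [← Finset.insert_Icc_right_eq_Icc_add_one (by omega), Finset.prod_insert (by
            simp only [Finset.mem_Icc]; omega), mul_assoc]

private lemma coeff_le {d : ℕ} {A : Matrix (Fin d) (Fin d) ℝ} {c : ℝ} (hc : 0 ≤ c)
    (h : ∀ x y : Fin d → ℝ, (∀ i, 0 < x i) → (∀ i, 0 < y i) → 0 < hilbertDist x y →
      hilbertDist (A.mulVec x) (A.mulVec y) ≤ c * hilbertDist x y) :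
    birkhoffCoeff A ≤ c := by
  apply Real.sSup_le _ hc
  rintro t ⟨x, y, hx, hy, hD, rfl⟩
  rw [div_le_iff₀ hD]
  exact h x y hx hy hD

private lemma coeff_nonneg {d : ℕ} {A : Matrix (Fin d) (Fin d) ℝ}
    (h : ∀ x y : Fin d → ℝ, (∀ i, 0 < x i) → (∀ i, 0 < y i) →
      0 ≤ hilbertDist (A.mulVec x) (A.mulVec y)) :
    0 ≤ birkhoffCoeff A := by
  apply Real.sSup_nonneg
  rintro t ⟨x, y, hx, hy, hD, rfl⟩
  exact div_nonneg (h x y hx hy) hD.le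

/-- If all entries of each `F_n` are `≥ 1` and `‖F_n‖₁ ≤ C·n`
for all sufficiently large `n`, then `τ(F_n F_{n-1} ⋯ F_m) → 0` for every `m`. -/
theorem stmt8 {d : ℕ} (F : ℕ → Matrix (Fin d) (Fin d) ℝ)
    (hF : ∀ n i j, 1 ≤ F n i j) (C : ℝ) (hC : 0 < C)
    (hnorm : ∀ᶠ n in atTop, norm1 (F n) ≤ C * n) :
    ∀ m, Tendsto (fun n => birkhoffCoeff (revProd F m n)) atTop (nhds 0) := by
  intro m
  rcases Nat.eq_zero_or_pos d with hd0 | hd0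
  · -- degenerate case d = 0
    subst hd0
    have hzero : ∀ n, birkhoffCoeff (revProd F m n) = 0 := by
      intro n
      unfold birkhoffCoeff
      have hset : {t : ℝ | ∃ x y : Fin 0 → ℝ, (∀ i, 0 < x i) ∧ (∀ i, 0 < y i) ∧
          0 < hilbertDist x y ∧
          t = hilbertDist ((revProd F m n).mulVec x) ((revProd F m n).mulVec y)
            / hilbertDist x y} = ∅ := by
        ext t
        simp only [Set.mem_setOf_eq, Set.mem_empty_iff_false, iff_false, not_exists]
        rintro x y ⟨hx, hy, hD, ht⟩
        have : hilbertDist x y = 0 := by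
          unfold hilbertDist
          rw [Real.iSup_of_isEmpty, Real.log_zero]
        linarith
      rw [hset, Real.sSup_empty]
    simp only [hzero]
    exact tendsto_const_nhds
  · haveI : NeZero d := ⟨hd0.ne'⟩
    rw [eventually_atTop] at hnorm
    obtain ⟨n₀, hn₀⟩ := hnorm
    set lam : ℕ → ℝ := fun k => (norm1 (F k) - 1) / (norm1 (F k) + 1) with hlamdef
    have hN1 : ∀ k, 1 ≤ norm1 (F k) := fun k => one_le_norm1 (hF k)
    have hlam0 : ∀ k, 0 ≤ lam k := fun k =>
      div_nonneg (by linarith [hN1 k]) (by linarith [hN1 k])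
    have hlam1 : ∀ k, lam k ≤ 1 := by
      intro k
      show (norm1 (F k) - 1) / (norm1 (F k) + 1) ≤ 1
      rw [div_le_one (by linarith [hN1 k])]
      linarith [hN1 k]
    set n₂ := max n₀ 1 with hn₂def
    set g : ℕ → ℝ := fun k => if n₂ ≤ k then 2 / (C * k + 1) else 0 with hgdef
    have hCk : ∀ k : ℕ, 0 < C * k + 1 := fun k => by positivity
    have hg0 : ∀ k, 0 ≤ g k := by
      intro k
      rw [hgdef]
      by_cases h : n₂ ≤ k
      · simp only [if_pos h]
        positivity
      · simp only [if_neg h]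
        exact le_rfl
    have hlamg : ∀ k, lam k ≤ Real.exp (-g k) := by
      intro k
      by_cases h : n₂ ≤ k
      · have hNle : norm1 (F k) ≤ C * k := hn₀ k (le_trans (le_max_left n₀ 1) h)
        have step1 : lam k ≤ 1 - 2 / (C * k + 1) := by
          show (norm1 (F k) - 1) / (norm1 (F k) + 1) ≤ 1 - 2 / (C * ↑k + 1)
          have hb : norm1 (F k) + 1 ≠ 0 := ne_of_gt (by linarith [hN1 k])
          have e : (norm1 (F k) - 1) / (norm1 (F k) + 1) = 1 - 2 / (norm1 (F k) + 1) := by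
            rw [div_eq_iff hb, sub_mul, one_mul, div_mul_cancel₀ _ hb]
            ring
          rw [e]
          have h2 : 2 / (C * ↑k + 1) ≤ 2 / (norm1 (F k) + 1) :=
            div_le_div_of_nonneg_left (by norm_num) (by linarith [hN1 k]) (by linarith)
          linarith
        have step2 : 1 - 2 / (C * ↑k + 1) ≤ Real.exp (-(2 / (C * ↑k + 1))) := by
          have := Real.add_one_le_exp (-(2 / (C * ↑k + 1)))
          linarith
        have hgk : g k = 2 / (C * ↑k + 1) := if_pos h
        rw [hgk]
        linarith
      · have hgk : g k = 0 := if_neg h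
        rw [hgk, neg_zero, Real.exp_zero]
        exact hlam1 k
    have hprod : ∀ n, (∏ k ∈ Finset.Icc m n, lam k)
        ≤ Real.exp (-(∑ k ∈ Finset.Icc m n, g k)) := by
      intro n
      calc (∏ k ∈ Finset.Icc m n, lam k) ≤ ∏ k ∈ Finset.Icc m n, Real.exp (-g k) :=
            Finset.prod_le_prod (fun k _ => hlam0 k) (fun k _ => hlamg k)
        _ = Real.exp (∑ k ∈ Finset.Icc m n, -g k) := (Real.exp_sum _ _).symm
        _ = Real.exp (-(∑ k ∈ Finset.Icc m n, g k)) := by rw [Finset.sum_neg_distrib]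
    set n₃ := max m n₂ with hn₃def
    have hSum : Tendsto (fun n => ∑ k ∈ Finset.Icc m n, g k) atTop atTop := by
      apply tendsto_atTop_mono' atTop
        (f₁ := fun n => (2 / (C + 1)) * ((∑ i ∈ Finset.range (n + 1), (1:ℝ) / (i + 1))
          - (∑ i ∈ Finset.range n₃, (1:ℝ) / (i + 1))))
      · filter_upwards [eventually_ge_atTop n₃] with n hn
        have hsub : Finset.Icc n₃ n ⊆ Finset.Icc m n :=
          Finset.Icc_subset_Icc_left (le_max_left m n₂)
        calc (2 / (C + 1)) * ((∑ i ∈ Finset.range (n + 1), (1:ℝ) / (i + 1))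
              - (∑ i ∈ Finset.range n₃, (1:ℝ) / (i + 1)))
            = (2 / (C + 1)) * (∑ i ∈ Finset.Ico n₃ (n + 1), (1:ℝ) / (i + 1)) := by
              rw [Finset.sum_Ico_eq_sub _ (by omega)]
          _ = ∑ i ∈ Finset.Ico n₃ (n + 1), (2 / (C + 1)) * ((1:ℝ) / (i + 1)) :=
              Finset.mul_sum _ _ _
          _ = ∑ i ∈ Finset.Icc n₃ n, (2 / (C + 1)) * ((1:ℝ) / (i + 1)) := by
              rw [Finset.Ico_add_one_right_eq_Icc]
          _ ≤ ∑ i ∈ Finset.Icc n₃ n, g i := by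
              apply Finset.sum_le_sum
              intro k hk
              rw [Finset.mem_Icc] at hk
              have hkn₂ : n₂ ≤ k := le_trans (le_max_right m n₂) hk.1
              have hgk : g k = 2 / (C * ↑k + 1) := if_pos hkn₂
              rw [hgk]
              have e : (2 / (C + 1)) * ((1:ℝ) / (↑k + 1)) = 2 / ((C + 1) * (↑k + 1)) := by
                field_simp
              rw [e]
              apply div_le_div_of_nonneg_left (by norm_num) (hCk k)
              have : (0:ℝ) ≤ ↑k := Nat.cast_nonneg k
              nlinarith
          _ ≤ ∑ k ∈ Finset.Icc m n, g k :=
              Finset.sum_le_sum_of_subset_of_nonneg hsub (fun k _ _ => hg0 k)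
      · have t1 : Tendsto (fun n : ℕ => ∑ i ∈ Finset.range (n + 1), (1:ℝ) / (i + 1))
            atTop atTop :=
          Real.tendsto_sum_range_one_div_nat_succ_atTop.comp (tendsto_add_atTop_nat 1)
        have t2 := tendsto_atTop_add_const_right atTop
          (-(∑ i ∈ Finset.range n₃, (1:ℝ) / (↑i + 1))) t1
        have t3 := Tendsto.const_mul_atTop (show (0:ℝ) < 2 / (C + 1) by positivity) t2
        simpa [sub_eq_add_neg] using t3
    have hexp : Tendsto (fun n => Real.exp (-(∑ k ∈ Finset.Icc m n, g k)))
        atTop (nhds 0) :=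
      Real.tendsto_exp_atBot.comp (tendsto_neg_atTop_atBot.comp hSum)
    apply squeeze_zero' ?_ ?_ hexp
    · filter_upwards [eventually_ge_atTop m] with n hn
      apply coeff_nonneg
      intro x y hx hy
      exact hilbertDist_nonneg (mulVec_pos (revProd_entries F hF m n hn) hx)
        (mulVec_pos (revProd_entries F hF m n hn) hy)
    · filter_upwards [eventually_ge_atTop m] with n hn
      calc birkhoffCoeff (revProd F m n) ≤ ∏ k ∈ Finset.Icc m n, lam k := by
            apply coeff_le (Finset.prod_nonneg fun k _ => hlam0 k)
            intro x y hx hy _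
            exact prod_contract F hF m n hn x y hx hy
        _ ≤ Real.exp (-(∑ k ∈ Finset.Icc m n, g k)) := hprod n
end
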